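/- For a, b ∈ ℝ with a + b ≥ 1 and b ≥ 0, the function g(x) = |x|^b · (log(1+|x|))^a is locally Lipschitz continuous on ℝ, and if a + b > 0 then g(0) = 0. -/

import Mathlib

open Real Set

private lemma log_one_add_lb {t : ℝ} (ht : 0 < t) : t / (1 + t) ≤ Real.log (1 + t) := by
  have h1 : (0:ℝ) < 1 + t := by linarith
  have h2 := Real.one_sub_inv_le_log_of_pos h1
  have h3 : 1 - (1 + t)⁻¹ = t / (1 + t) := by field_simp; ring
  linarith [h3 ▸ h2]

private lemma log_one_add_ub {t : ℝ} (ht : 0 ≤ t) : Real.log (1 + t) ≤ t := by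
  have h1 : (0:ℝ) < 1 + t := by linarith
  have := Real.log_le_sub_one_of_pos h1
  linarith

private lemma log_one_add_pos {t : ℝ} (ht : 0 < t) : 0 < Real.log (1 + t) :=
  lt_of_lt_of_le (by positivity) (log_one_add_lb ht)

/-- key pointwise estimate: `log(1+t)^c ≤ t^c * (1+R)^|c|` for `0 < t ≤ R`. -/
private lemma log_rpow_le {t R c : ℝ} (ht : 0 < t) (htR : t ≤ R) :
    Real.log (1 + t) ^ c ≤ t ^ c * (1 + R) ^ |c| := by
  have h1R : (1:ℝ) ≤ 1 + R := by linarith [ht.le.trans htR]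
  have hlogpos := log_one_add_pos ht
  rcases le_or_gt 0 c with hc | hc
  · have h1 : Real.log (1 + t) ^ c ≤ t ^ c :=
      Real.rpow_le_rpow hlogpos.le (log_one_add_ub ht.le) hc
    have h2 : (1:ℝ) ≤ (1 + R) ^ |c| := by
      calc (1:ℝ) = (1 + R) ^ (0:ℝ) := (Real.rpow_zero _).symm
        _ ≤ (1 + R) ^ |c| := Real.rpow_le_rpow_of_exponent_le h1R (abs_nonneg c)
    nlinarith [Real.rpow_nonneg ht.le c, h1, h2]
  · have hq : (0:ℝ) < t / (1 + t) := by positivity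
    have h1 : Real.log (1 + t) ^ c ≤ (t / (1 + t)) ^ c :=
      Real.rpow_le_rpow_of_nonpos hq (log_one_add_lb ht) hc.le
    have h2 : (t / (1 + t)) ^ c = t ^ c * ((1 + t) ^ c)⁻¹ := by
      rw [Real.div_rpow ht.le (by positivity), div_eq_mul_inv]
    have h3 : ((1 + t) ^ c)⁻¹ = (1 + t) ^ (-c) := (Real.rpow_neg (by positivity) c).symm
    have h4 : (1 + t) ^ (-c) ≤ (1 + R) ^ (-c) :=
      Real.rpow_le_rpow (by positivity) (by linarith) (by linarith)
    have h5 : |c| = -c := abs_of_neg hc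
    calc Real.log (1 + t) ^ c ≤ t ^ c * (1 + t) ^ (-c) := by rw [← h3, ← h2]; exact h1
      _ ≤ t ^ c * (1 + R) ^ (-c) :=
          mul_le_mul_of_nonneg_left h4 (Real.rpow_nonneg ht.le c)
      _ = t ^ c * (1 + R) ^ |c| := by rw [h5]

/-- derivative of `f t = t^b * log(1+t)^a` for `t > 0`. -/
private lemma hasDerivAt_f {a b t : ℝ} (ht : 0 < t) :
    HasDerivAt (fun s : ℝ => s ^ b * Real.log (1 + s) ^ a)
      (b * t ^ (b - 1) * Real.log (1 + t) ^ a
        + t ^ b * ((1 + t)⁻¹ * a * Real.log (1 + t) ^ (a - 1))) t := by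
  have h1t : (0:ℝ) < 1 + t := by linarith
  have hlogpos := log_one_add_pos ht
  have hpow : HasDerivAt (fun s : ℝ => s ^ b) (b * t ^ (b - 1)) t :=
    Real.hasDerivAt_rpow_const (Or.inl ht.ne')
  have hlin : HasDerivAt (fun s : ℝ => 1 + s) 1 t := (hasDerivAt_id t).const_add 1
  have hlog : HasDerivAt (fun s : ℝ => Real.log (1 + s)) (1 / (1 + t)) t :=
    hlin.log h1t.ne'
  have hlog' : HasDerivAt (fun s : ℝ => Real.log (1 + s) ^ a)
      ((1 / (1 + t)) * a * Real.log (1 + t) ^ (a - 1)) t :=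
    hlog.rpow_const (Or.inl hlogpos.ne')
  have := hpow.mul hlog'
  rw [one_div] at this
  exact this

theorem rpow_log_locallyLipschitz (a b : ℝ) (hab : 1 ≤ a + b) (hb : 0 ≤ b) :
    (∀ K : Set ℝ, IsCompact K → ∃ L : NNReal,
      LipschitzOnWith L (fun x : ℝ => |x| ^ b * (Real.log (1 + |x|)) ^ a) K) ∧
    (0 < a + b → |(0 : ℝ)| ^ b * (Real.log (1 + |(0 : ℝ)|)) ^ a = 0) := by
  set f : ℝ → ℝ := fun t => t ^ b * Real.log (1 + t) ^ a with hf
  have hf0 : f 0 = 0 := by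
    simp only [hf, add_zero, Real.log_one]
    rcases hb.eq_or_lt with h | h
    · have ha : a ≠ 0 := by intro h'; rw [← h, h'] at hab; norm_num at hab
      rw [Real.zero_rpow ha, mul_zero]
    · rw [Real.zero_rpow h.ne', zero_mul]
  refine ⟨?_, fun _ => by simpa only [abs_zero] using hf0⟩
  intro K hK
  obtain ⟨r, hr⟩ := hK.isBounded.subset_closedBall 0
  set R : ℝ := max 1 r with hR
  have hR1 : (1:ℝ) ≤ R := le_max_left _ _
  have hRpos : (0:ℝ) < R := by linarith
  have h1R : (1:ℝ) ≤ 1 + R := by linarith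
  have habs : ∀ x ∈ K, |x| ≤ R := by
    intro x hx
    have := hr hx
    rw [Metric.mem_closedBall, Real.dist_eq, sub_zero] at this
    exact this.trans (le_max_right _ _)
  set L : ℝ := (b + |a|) * R ^ (a + b - 1) * (1 + R) ^ (|a| + |a - 1|) with hL
  have hba : (1:ℝ) ≤ b + |a| := by
    rcases le_or_gt 0 a with h | h
    · rw [abs_of_nonneg h]; linarith
    · rw [abs_of_neg h]; linarith
  have hL0 : 0 ≤ L := by positivity
  -- the common bound `c^(a+b-1) * (1+R)^e ≤ R^(a+b-1) * (1+R)^(|a|+|a-1|)` for exponents e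
  have hcore : ∀ c : ℝ, 0 < c → c ≤ R → ∀ e : ℝ, e ≤ |a| + |a - 1| →
      c ^ (a + b - 1) * (1 + R) ^ e ≤ R ^ (a + b - 1) * (1 + R) ^ (|a| + |a - 1|) := by
    intro c hc hcR e he
    have e1 : c ^ (a + b - 1) ≤ R ^ (a + b - 1) :=
      Real.rpow_le_rpow hc.le hcR (by linarith)
    have e2 : (1 + R) ^ e ≤ (1 + R) ^ (|a| + |a - 1|) :=
      Real.rpow_le_rpow_of_exponent_le h1R he
    exact mul_le_mul e1 e2 (Real.rpow_nonneg (by linarith) e) (Real.rpow_nonneg hRpos.le _)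
  -- bound `f x ≤ L * x` for `0 < x ≤ R`
  have hfx : ∀ x : ℝ, 0 < x → x ≤ R → f x ≤ L * x := by
    intro x hx hxR
    have h1 : Real.log (1 + x) ^ a ≤ x ^ a * (1 + R) ^ |a| := log_rpow_le hx hxR
    have h2 : f x ≤ x ^ b * (x ^ a * (1 + R) ^ |a|) :=
      mul_le_mul_of_nonneg_left h1 (Real.rpow_nonneg hx.le b)
    have h3 : x ^ b * x ^ a = x * x ^ (a + b - 1) := by
      rw [← Real.rpow_add hx, show b + a = 1 + (a + b - 1) by ring, Real.rpow_add hx,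
        Real.rpow_one]
    have h4 : x ^ (a + b - 1) * (1 + R) ^ |a| ≤ R ^ (a + b - 1) * (1 + R) ^ (|a| + |a - 1|) :=
      hcore x hx hxR |a| (by linarith [abs_nonneg (a - 1)])
    have h5 : f x ≤ x * (x ^ (a + b - 1) * (1 + R) ^ |a|) := by
      calc f x ≤ x ^ b * (x ^ a * (1 + R) ^ |a|) := h2
        _ = (x ^ b * x ^ a) * (1 + R) ^ |a| := by ring
        _ = x * (x ^ (a + b - 1) * (1 + R) ^ |a|) := by rw [h3]; ring
    have h6 : x * (x ^ (a + b - 1) * (1 + R) ^ |a|) ≤ x * L := by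
      apply mul_le_mul_of_nonneg_left _ hx.le
      calc x ^ (a + b - 1) * (1 + R) ^ |a|
          ≤ R ^ (a + b - 1) * (1 + R) ^ (|a| + |a - 1|) := h4
        _ ≤ L := by
            rw [hL]
            nlinarith [Real.rpow_nonneg hRpos.le (a + b - 1),
              Real.rpow_nonneg (show (0:ℝ) ≤ 1 + R by linarith) (|a| + |a - 1|)]
    linarith [h5, h6]
  -- bound on the derivative
  set F' : ℝ → ℝ := fun t => b * t ^ (b - 1) * Real.log (1 + t) ^ a
      + t ^ b * ((1 + t)⁻¹ * a * Real.log (1 + t) ^ (a - 1)) with hF'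
  have hderiv_bound : ∀ c : ℝ, 0 < c → c ≤ R → |F' c| ≤ L := by
    intro c hc hcR
    have hlogpos := log_one_add_pos hc
    have h1c : (0:ℝ) < 1 + c := by linarith
    have hcb1 : c ^ (b - 1) * c ^ a = c ^ (a + b - 1) := by
      rw [← Real.rpow_add hc]; ring_nf
    have hcba : c ^ b * c ^ (a - 1) = c ^ (a + b - 1) := by
      rw [← Real.rpow_add hc]; ring_nf
    -- term 1
    have ht1 : b * c ^ (b - 1) * Real.log (1 + c) ^ a
        ≤ b * (R ^ (a + b - 1) * (1 + R) ^ (|a| + |a - 1|)) := by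
      have e1 : Real.log (1 + c) ^ a ≤ c ^ a * (1 + R) ^ |a| := log_rpow_le hc hcR
      have e2 : c ^ (b - 1) * Real.log (1 + c) ^ a ≤ c ^ (b - 1) * (c ^ a * (1 + R) ^ |a|) :=
        mul_le_mul_of_nonneg_left e1 (Real.rpow_nonneg hc.le _)
      have e3 : c ^ (b - 1) * (c ^ a * (1 + R) ^ |a|) = c ^ (a + b - 1) * (1 + R) ^ |a| := by
        rw [← mul_assoc, hcb1]
      have e4 := hcore c hc hcR |a| (by linarith [abs_nonneg (a - 1)])
      have e5 : c ^ (b - 1) * Real.log (1 + c) ^ a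
          ≤ R ^ (a + b - 1) * (1 + R) ^ (|a| + |a - 1|) := by
        calc c ^ (b - 1) * Real.log (1 + c) ^ a ≤ c ^ (a + b - 1) * (1 + R) ^ |a| := by
              rw [← e3]; exact e2
          _ ≤ _ := e4
      calc b * c ^ (b - 1) * Real.log (1 + c) ^ a
          = b * (c ^ (b - 1) * Real.log (1 + c) ^ a) := by ring
        _ ≤ b * (R ^ (a + b - 1) * (1 + R) ^ (|a| + |a - 1|)) :=
            mul_le_mul_of_nonneg_left e5 hb
    -- term 2
    have ht2 : c ^ b * ((1 + c)⁻¹ * |a| * Real.log (1 + c) ^ (a - 1))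
        ≤ |a| * (R ^ (a + b - 1) * (1 + R) ^ (|a| + |a - 1|)) := by
      have e1 : Real.log (1 + c) ^ (a - 1) ≤ c ^ (a - 1) * (1 + R) ^ |a - 1| :=
        log_rpow_le hc hcR
      have einv : (1 + c)⁻¹ ≤ 1 := by
        rw [inv_le_one_iff₀]; right; linarith
      have e2 : c ^ b * ((1 + c)⁻¹ * |a| * Real.log (1 + c) ^ (a - 1))
          ≤ c ^ b * (|a| * (c ^ (a - 1) * (1 + R) ^ |a - 1|)) := by
        apply mul_le_mul_of_nonneg_left _ (Real.rpow_nonneg hc.le b)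
        calc (1 + c)⁻¹ * |a| * Real.log (1 + c) ^ (a - 1)
            ≤ 1 * |a| * Real.log (1 + c) ^ (a - 1) := by
              apply mul_le_mul_of_nonneg_right _ (Real.rpow_nonneg hlogpos.le _)
              exact mul_le_mul_of_nonneg_right einv (abs_nonneg a)
          _ = |a| * Real.log (1 + c) ^ (a - 1) := by ring
          _ ≤ |a| * (c ^ (a - 1) * (1 + R) ^ |a - 1|) :=
              mul_le_mul_of_nonneg_left e1 (abs_nonneg a)
      have e3 : c ^ b * (|a| * (c ^ (a - 1) * (1 + R) ^ |a - 1|))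
          = |a| * (c ^ (a + b - 1) * (1 + R) ^ |a - 1|) := by
        rw [show c ^ b * (|a| * (c ^ (a - 1) * (1 + R) ^ |a - 1|))
            = |a| * ((c ^ b * c ^ (a - 1)) * (1 + R) ^ |a - 1|) by ring, hcba]
      have e4 := hcore c hc hcR |a - 1| (by linarith [abs_nonneg a])
      calc c ^ b * ((1 + c)⁻¹ * |a| * Real.log (1 + c) ^ (a - 1))
          ≤ |a| * (c ^ (a + b - 1) * (1 + R) ^ |a - 1|) := by rw [← e3]; exact e2
        _ ≤ |a| * (R ^ (a + b - 1) * (1 + R) ^ (|a| + |a - 1|)) :=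
            mul_le_mul_of_nonneg_left e4 (abs_nonneg a)
    -- combine
    have habs2 : |F' c| ≤ b * c ^ (b - 1) * Real.log (1 + c) ^ a
        + c ^ b * ((1 + c)⁻¹ * |a| * Real.log (1 + c) ^ (a - 1)) := by
      rw [hF']
      refine (abs_add_le _ _).trans (add_le_add ?_ ?_)
      · rw [abs_of_nonneg (by positivity)]
      · rw [abs_mul, abs_of_nonneg (Real.rpow_nonneg hc.le b)]
        apply mul_le_mul_of_nonneg_left _ (Real.rpow_nonneg hc.le b)
        rw [abs_mul, abs_mul, abs_of_nonneg (by positivity : (0:ℝ) ≤ (1 + c)⁻¹),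
          abs_of_nonneg (Real.rpow_nonneg hlogpos.le _)]
    calc |F' c| ≤ _ := habs2
      _ ≤ b * (R ^ (a + b - 1) * (1 + R) ^ (|a| + |a - 1|))
          + |a| * (R ^ (a + b - 1) * (1 + R) ^ (|a| + |a - 1|)) := add_le_add ht1 ht2
      _ = L := by rw [hL]; ring
  -- f is nonnegative on [0, ∞)
  have hfnn : ∀ x : ℝ, 0 ≤ x → 0 ≤ f x := by
    intro x hx
    exact mul_nonneg (Real.rpow_nonneg hx b)
      (Real.rpow_nonneg (Real.log_nonneg (by linarith)) a)
  -- main one-sided Lipschitz estimate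
  have main : ∀ x y : ℝ, 0 ≤ y → y ≤ x → x ≤ R → |f x - f y| ≤ L * (x - y) := by
    intro x y hy hyx hxR
    rcases eq_or_lt_of_le hyx with rfl | hlt
    · simp
    rcases eq_or_lt_of_le hy with rfl | hy0
    · rw [hf0, sub_zero, abs_of_nonneg (hfnn x (by linarith)), sub_zero]
      exact hfx x hlt hxR
    · have hcont : ContinuousOn f (Icc y x) := fun t ht =>
        ((hasDerivAt_f (hy0.trans_le ht.1)).continuousAt).continuousWithinAt
      have hdiff : ∀ t ∈ Ioo y x, HasDerivAt f (F' t) t := fun t ht =>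
        hasDerivAt_f (hy0.trans ht.1)
      obtain ⟨c, hc, hceq⟩ := exists_hasDerivAt_eq_slope f F' hlt hcont hdiff
      have hxy : x - y ≠ 0 := by linarith
      have heq : f x - f y = F' c * (x - y) := by
        rw [hceq]; field_simp
      rw [heq, abs_mul, abs_of_pos (by linarith : (0:ℝ) < x - y)]
      exact mul_le_mul_of_nonneg_right
        (hderiv_bound c (hy0.trans hc.1) (le_of_lt (hc.2.trans_le hxR))) (by linarith)
  -- symmetric version
  have hsym : ∀ x y : ℝ, 0 ≤ x → x ≤ R → 0 ≤ y → y ≤ R → |f x - f y| ≤ L * |x - y| := by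
    intro x y hx hxR hy hyR
    rcases le_total y x with h | h
    · rw [abs_of_nonneg (by linarith : (0:ℝ) ≤ x - y)]; exact main x y hy h hxR
    · rw [abs_sub_comm, abs_sub_comm x y, abs_of_nonneg (by linarith : (0:ℝ) ≤ y - x)]
      exact main y x hx h hyR
  refine ⟨L.toNNReal, LipschitzOnWith.of_dist_le_mul fun x hx y hy => ?_⟩
  rw [Real.dist_eq, Real.dist_eq, Real.coe_toNNReal _ hL0]
  have h1 := hsym |x| |y| (abs_nonneg x) (habs x hx) (abs_nonneg y) (habs y hy)
  have h2 : abs (|x| - |y|) ≤ |x - y| := abs_abs_sub_abs_le_abs_sub x y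
  exact le_trans h1 (mul_le_mul_of_nonneg_left h2 hL0)
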